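/- Let q ≥ 1 and m ≥ 1. Let p : ℝ^q → ℂ be continuous, positively homogeneous of degree m (p(t • ξ) = tᵐ · p(ξ) for every real t ≥ 0 and every ξ ∈ ℝ^q), and elliptic (p(ξ) ≠ 0 for every ξ ≠ 0). Then there exists μ > 0 such that every linear map A : ℝ^q → ℝ^q satisfying p(A ξ) = p(ξ) for all ξ ∈ ℝ^q has operator norm at most μ with respect to the Euclidean norm: ‖A v‖ ≤ μ ‖v‖ for all v ∈ ℝ^q. -/

import Mathlib

/-- Uniform upper bound: every linear map preserving a continuous, positively homogeneous
(of degree `m`), elliptic symbol `p` on Euclidean `ℝ^q` has operator norm at most some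
uniform `μ > 0`. -/
theorem symbol_preserving_maps_uniformly_bounded_above
    {q m : ℕ} (hq : 1 ≤ q) (hm : 1 ≤ m)
    (p : EuclideanSpace ℝ (Fin q) → ℂ)
    (hp_cont : Continuous p)
    (hp_hom : ∀ t : ℝ, 0 ≤ t → ∀ ξ : EuclideanSpace ℝ (Fin q),
      p (t • ξ) = (t : ℂ) ^ m * p ξ)
    (hp_ell : ∀ ξ : EuclideanSpace ℝ (Fin q), ξ ≠ 0 → p ξ ≠ 0) :
    ∃ μ : ℝ, 0 < μ ∧
      ∀ A : EuclideanSpace ℝ (Fin q) →ₗ[ℝ] EuclideanSpace ℝ (Fin q),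
        (∀ ξ, p (A ξ) = p ξ) → ∀ v, ‖A v‖ ≤ μ * ‖v‖ := by
  have hSc : IsCompact (Metric.sphere (0 : EuclideanSpace ℝ (Fin q)) 1) := isCompact_sphere _ _
  have hnontriv : Nontrivial (EuclideanSpace ℝ (Fin q)) := by
    refine nontrivial_of_ne (EuclideanSpace.single (⟨0, hq⟩ : Fin q) (1 : ℝ)) 0 ?_
    intro h
    have := congrArg norm h
    simp [EuclideanSpace.norm_single] at this
  have hSne : (Metric.sphere (0 : EuclideanSpace ℝ (Fin q)) 1).Nonempty := by
    obtain ⟨x, hx⟩ := exists_ne (0 : EuclideanSpace ℝ (Fin q))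
    refine ⟨‖x‖⁻¹ • x, ?_⟩
    have hx' : ‖x‖ ≠ 0 := norm_ne_zero_iff.mpr hx
    simp [mem_sphere_iff_norm, norm_smul, abs_of_nonneg (norm_nonneg x),
      inv_mul_cancel₀ hx']
  have hcontabs : ContinuousOn (fun ξ : EuclideanSpace ℝ (Fin q) => ‖p ξ‖)
      (Metric.sphere (0 : EuclideanSpace ℝ (Fin q)) 1) := by
    apply Continuous.continuousOn
    exact continuous_norm.comp hp_cont
  obtain ⟨u₀, hu₀, hmin⟩ := hSc.exists_isMinOn hSne hcontabs
  obtain ⟨u₁, hu₁, hmax⟩ := hSc.exists_isMaxOn hSne hcontabs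
  set c := ‖p u₀‖ with hc
  set C := ‖p u₁‖ with hC
  have hcpos : 0 < c := by
    have hu₀ne : u₀ ≠ 0 := by
      intro h
      rw [mem_sphere_iff_norm, h] at hu₀; simp at hu₀
    exact norm_pos_iff.mpr (hp_ell u₀ hu₀ne)
  set μ := max 1 (C / c) with hμ
  have hμ1 : (1 : ℝ) ≤ μ := le_max_left _ _
  have hμpos : 0 < μ := lt_of_lt_of_le one_pos hμ1
  refine ⟨μ, hμpos, fun A hA v => ?_⟩
  -- first prove for unit vectors
  have key : ∀ u : EuclideanSpace ℝ (Fin q), ‖u‖ = 1 → ‖A u‖ ≤ μ := by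
    intro u hu
    by_cases hAu : A u = 0
    · simp [hAu]; exact le_of_lt hμpos
    · set r := ‖A u‖ with hr
      have hrpos : 0 < r := norm_pos_iff.mpr hAu
      set w := r⁻¹ • A u with hw
      have hwS : w ∈ Metric.sphere (0 : EuclideanSpace ℝ (Fin q)) 1 := by
        simp [hw, mem_sphere_iff_norm, norm_smul, abs_of_nonneg hrpos.le,
          inv_mul_cancel₀ hrpos.ne', ← hr]
      have hAu_eq : A u = r • w := by
        rw [hw, smul_smul, mul_inv_cancel₀ hrpos.ne', one_smul]
      have hpu : p u = (r : ℂ) ^ m * p w := by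
        rw [← hA u, hAu_eq, hp_hom r hrpos.le]
      have habs : ‖p u‖ = r ^ m * ‖p w‖ := by
        rw [hpu, norm_mul, norm_pow, Complex.norm_of_nonneg hrpos.le]
      have huS : u ∈ Metric.sphere (0 : EuclideanSpace ℝ (Fin q)) 1 := by
        simpa [mem_sphere_iff_norm] using hu
      have h1 : r ^ m * c ≤ ‖p u‖ := by
        rw [habs]
        exact mul_le_mul_of_nonneg_left (hmin hwS) (pow_nonneg hrpos.le m)
      have h2 : ‖p u‖ ≤ C := hmax huS
      have h3 : r ^ m ≤ C / c := by
        rw [le_div_iff₀ hcpos]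
        exact h1.trans h2
      have h4 : r ^ m ≤ μ ^ m := by
        calc r ^ m ≤ C / c := h3
          _ ≤ μ := le_max_right _ _
          _ ≤ μ ^ m := le_self_pow₀ hμ1 (by omega)
      exact le_of_pow_le_pow_left₀ (by omega) hμpos.le h4
  by_cases hv : v = 0
  · simp [hv]
  · have hvnorm : ‖v‖ ≠ 0 := norm_ne_zero_iff.mpr hv
    set u := ‖v‖⁻¹ • v with hu
    have huu : ‖u‖ = 1 := by
      simp [hu, norm_smul, abs_of_nonneg (norm_nonneg v), inv_mul_cancel₀ hvnorm]
    have hvv : v = ‖v‖ • u := by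
      rw [hu, smul_smul, mul_inv_cancel₀ hvnorm, one_smul]
    have hAv : A v = ‖v‖ • A u := by
      conv_lhs => rw [hvv]
      rw [map_smul]
    calc ‖A v‖ = ‖v‖ * ‖A u‖ := by
          rw [hAv, norm_smul, Real.norm_eq_abs, abs_norm]
      _ ≤ ‖v‖ * μ := mul_le_mul_of_nonneg_left (key u huu) (norm_nonneg v)
      _ = μ * ‖v‖ := mul_comm _ _
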